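/- Let K₀ be a perfect-hull setting: K₀ = k((t)) with k perfect of characteristic p > 0 and v the t-adic valuation, K = K₀^{1/p^∞} its perfect hull with the unique extension of v. Let ϑ be a root of X^p - X - 1/t. Then the extension (K(ϑ)|K,v) is immediate of degree p (hence a defect extension), and v(ϑ - K) = {α ∈ vK | α < 0}. -/

import Mathlib

open scoped Multiplicative


section OrderHelpers

variable {Γ : Type*} [LinearOrderedCommGroupWithZero Γ]

private lemma aux_pow_lt_pow {a b : Γ} {n : ℕ} (hn : n ≠ 0) (h : a < b) : a ^ n < b ^ n :=
  pow_lt_pow_left₀ h zero_le' hn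

private lemma aux_pow_le_pow {a b : Γ} (n : ℕ) (h : a ≤ b) : a ^ n ≤ b ^ n :=
  pow_le_pow_left₀ zero_le' h n

private lemma aux_pow_cancel {a b : Γ} {n : ℕ} (hn : n ≠ 0) (h : a ^ n = b ^ n) : a = b := by
  rcases lt_trichotomy a b with hc | hc | hc
  · exact absurd h (ne_of_lt (aux_pow_lt_pow hn hc))
  · exact hc
  · exact absurd h.symm (ne_of_lt (aux_pow_lt_pow hn hc))

private lemma aux_lt_of_pow_lt {a b : Γ} {n : ℕ} (h : a ^ n < b ^ n) : a < b := by
  by_contra hc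
  exact absurd h (not_lt.mpr (aux_pow_le_pow n (not_lt.mp hc)))

private lemma aux_one_lt_of_pow {a : Γ} {n : ℕ} (h : 1 < a ^ n) : 1 < a := by
  by_contra hc
  exact absurd h (not_lt.mpr (pow_le_one₀ zero_le' (not_lt.mp hc)))

private lemma aux_self_lt_pow {a : Γ} (h1 : 1 < a) {n : ℕ} (hn : 2 ≤ n) : a < a ^ n := by
  have := pow_lt_pow_right₀ h1 (show 1 < n by omega)
  rwa [pow_one] at this

variable {L : Type*} [Field L] (v : Valuation L Γ)

/-- `v (x + y) = v y` when `v x < v y`. -/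
private lemma val_add_right {x y : L} (h : v x < v y) : v (x + y) = v y := by
  rw [Valuation.map_add_of_distinct_val v (ne_of_lt h)]
  exact sup_eq_right.mpr (le_of_lt h)

/-- `v (x - y) = v y` when `v x < v y`. -/
private lemma val_sub_right {x y : L} (h : v x < v y) : v (x - y) = v y := by
  have h2 : v (-x) < v y := by rwa [Valuation.map_neg]
  rw [Valuation.map_sub_swap, sub_eq_neg_add]
  exact val_add_right v h2

/-- `v (x - y) = v x` when `v y < v x`. -/
private lemma val_sub_left {x y : L} (h : v y < v x) : v (x - y) = v x := by
  rw [Valuation.map_sub_swap]; exact val_sub_right v h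

private lemma val_sum_eq {ι : Type*} [DecidableEq ι] {s : Finset ι} {f : ι → L} {i₀ : ι} (hi₀ : i₀ ∈ s)
    (hne : v (f i₀) ≠ 0) (hlt : ∀ i ∈ s, i ≠ i₀ → v (f i) < v (f i₀)) :
    v (∑ i ∈ s, f i) = v (f i₀) := by
  rw [← Finset.add_sum_erase s f hi₀]
  have htail : v (∑ i ∈ s.erase i₀, f i) < v (f i₀) :=
    Valuation.map_sum_lt v hne (fun i hi =>
      hlt i (Finset.mem_of_mem_erase hi) (Finset.ne_of_mem_erase hi))
  rw [add_comm]
  exact val_add_right v htail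

end OrderHelpers

section LaurentHelpers

private lemma aux_gap {g : WithZero (Multiplicative ℤ)} (h : 1 < g) :
    (((Multiplicative.ofAdd (1:ℤ)) : Multiplicative ℤ) : WithZero (Multiplicative ℤ)) ≤ g := by
  lift g to Multiplicative ℤ using (ne_of_gt (lt_trans zero_lt_one h)) with x
  rw [← WithZero.coe_one, WithZero.coe_lt_coe] at h
  rw [WithZero.coe_le_coe]
  have h2 : (0:ℤ) < Multiplicative.toAdd x := h
  have h3 : (1:ℤ) ≤ Multiplicative.toAdd x := h2
  exact h3

variable {k : Type*} [Field k] {p : ℕ} [CharP k p]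

private lemma aux_charF : CharP (LaurentSeries k) p :=
  charP_of_injective_ringHom (HahnSeries.C_injective (Γ := ℤ) (R := k)) p

private lemma aux_expCharF (hp : p.Prime) : ExpChar (LaurentSeries k) p := by
  haveI := aux_charF (k := k) (p := p)
  exact ExpChar.prime hp

/-- value of `t⁻¹`. -/
private lemma aux_vu0 :
    Valued.v ((HahnSeries.single (1:ℤ) (1:k) : LaurentSeries k))⁻¹
      = (((Multiplicative.ofAdd (1:ℤ)) : Multiplicative ℤ) : WithZero (Multiplicative ℤ)) := by
  rw [map_inv₀, LaurentSeries.valuation_single_zpow]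
  rw [← WithZero.exp_neg, neg_neg]
  rfl

private lemma aux_one_lt_vu0 :
    (1:WithZero (Multiplicative ℤ)) < Valued.v ((HahnSeries.single (1:ℤ) (1:k) : LaurentSeries k))⁻¹ := by
  rw [aux_vu0]
  rw [← WithZero.coe_one, WithZero.coe_lt_coe, ← ofAdd_zero,
    Multiplicative.ofAdd_lt]
  norm_num

/-- Core lemma : `v (b^p - b - 1/t) > 1` for every Laurent series `b`. -/
private lemma aux_core (hp : p.Prime) (b : LaurentSeries k) :
    1 < Valued.v (b ^ p - b - ((HahnSeries.single (1:ℤ) (1:k) : LaurentSeries k))⁻¹) := by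
  set u0 : LaurentSeries k := ((HahnSeries.single (1:ℤ) (1:k) : LaurentSeries k))⁻¹ with hu0
  have h1 : (1:WithZero (Multiplicative ℤ)) < Valued.v u0 := aux_one_lt_vu0
  rcases le_or_gt (Valued.v b) 1 with hb | hb
  · have hbp : Valued.v (b ^ p) ≤ 1 := by
      rw [map_pow]; exact pow_le_one₀ zero_le' hb
    have hsub : Valued.v (b ^ p - b) ≤ 1 := by
      apply le_trans (Valuation.map_sub _ _ _); exact max_le hbp hb
    rw [val_sub_right _ (lt_of_le_of_lt hsub h1)]
    exact h1
  · -- 1 < v b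
    have hb0 : Valued.v b ≠ 0 := ne_of_gt (lt_trans zero_lt_one hb)
    have hblt : Valued.v b < Valued.v (b ^ p) := by
      rw [map_pow]; exact aux_self_lt_pow hb hp.two_le
    have hfirst : Valued.v (b ^ p - b) = Valued.v (b ^ p) := val_sub_left _ hblt
    have hu0lt : Valued.v u0 < Valued.v (b ^ p) := by
      rw [map_pow]
      calc Valued.v u0 = ((Multiplicative.ofAdd (1:ℤ) : Multiplicative ℤ) : WithZero (Multiplicative ℤ)) := aux_vu0
        _ < ((Multiplicative.ofAdd (1:ℤ) : Multiplicative ℤ) : WithZero (Multiplicative ℤ)) ^ p :=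
            aux_self_lt_pow (by
              rw [← WithZero.coe_one, WithZero.coe_lt_coe, ← ofAdd_zero,
                Multiplicative.ofAdd_lt]; norm_num) hp.two_le
        _ ≤ (Valued.v b) ^ p := aux_pow_le_pow p (aux_gap hb)
    have : Valued.v (b ^ p - b - u0) = Valued.v (b ^ p) := by
      rw [← hfirst] at hu0lt ⊢
      exact val_sub_left _ hu0lt
    rw [this, map_pow]
    exact lt_trans hb (aux_self_lt_pow hb hp.two_le)

/-- `v (b^p - b - (1/t)^(p^m)) > 1` for every Laurent series `b`. -/
private lemma aux_AS (hp : p.Prime) (m : ℕ) (b : LaurentSeries k) :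
    1 < Valued.v (b ^ p - b -
      ((HahnSeries.single (1:ℤ) (1:k) : LaurentSeries k))⁻¹ ^ (p ^ m)) := by
  haveI := aux_expCharF (k := k) hp
  induction m generalizing b with
  | zero => simpa using aux_core hp b
  | succ m ih =>
      set u0 : LaurentSeries k := ((HahnSeries.single (1:ℤ) (1:k) : LaurentSeries k))⁻¹
      have key : b ^ p - b - u0 ^ (p ^ (m+1))
          = (b - u0 ^ (p ^ m)) ^ p - (b - u0 ^ (p ^ m)) - u0 ^ (p ^ m) := by
        rw [sub_pow_expChar, ← pow_mul, ← pow_succ]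
        ring
      rw [key]
      exact ih (b - u0 ^ (p ^ m))

/-- Integer extraction: if `v (B₁^a₁ * u0^i) = v (B₂^a₂ * u0^j)` with `p ∣ a₁, a₂`,
then `p ∣ i - j`. -/
private lemma aux_int (B1 B2 : LaurentSeries k) (hB1 : B1 ≠ 0) (hB2 : B2 ≠ 0)
    (a1 a2 i j : ℕ) (ha1 : (p:ℤ) ∣ (a1:ℤ)) (ha2 : (p:ℤ) ∣ (a2:ℤ))
    (h : Valued.v (B1 ^ a1 * ((HahnSeries.single (1:ℤ) (1:k) : LaurentSeries k))⁻¹ ^ i)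
       = Valued.v (B2 ^ a2 * ((HahnSeries.single (1:ℤ) (1:k) : LaurentSeries k))⁻¹ ^ j)) :
    (p:ℤ) ∣ ((i:ℤ) - (j:ℤ)) := by
  have hv1 : Valued.v B1 ≠ 0 := (Valuation.ne_zero_iff _).mpr hB1
  have hv2 : Valued.v B2 ≠ 0 := (Valuation.ne_zero_iff _).mpr hB2
  rw [map_mul, map_mul, map_pow, map_pow, map_pow, map_pow, aux_vu0] at h
  lift Valued.v B1 to Multiplicative ℤ using hv1 with x1
  lift Valued.v B2 to Multiplicative ℤ using hv2 with x2
  rw [← WithZero.coe_pow, ← WithZero.coe_pow, ← WithZero.coe_pow, ← WithZero.coe_pow,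
    ← WithZero.coe_mul, ← WithZero.coe_mul, WithZero.coe_inj] at h
  have h2 := congrArg Multiplicative.toAdd h
  simp only [toAdd_mul, toAdd_pow, toAdd_ofAdd, nsmul_eq_mul,
    smul_eq_mul, mul_one] at h2
  -- h2 : a1 * toAdd x1 + i = a2 * toAdd x2 + j
  obtain ⟨q1, hq1⟩ := ha1
  obtain ⟨q2, hq2⟩ := ha2
  refine ⟨q2 * Multiplicative.toAdd x2 - q1 * Multiplicative.toAdd x1, ?_⟩
  have e1 : (a1:ℤ) * Multiplicative.toAdd x1 + (i:ℤ)
      = (a2:ℤ) * Multiplicative.toAdd x2 + (j:ℤ) := by exact_mod_cast h2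
  rw [hq1, hq2] at e1
  ring_nf
  ring_nf at e1
  linarith

end LaurentHelpers
/-- Let `k` be a perfect field of characteristic `p > 0`,
`K₀ = k((t))` with the `t`-adic valuation, and `K = K₀^{1/p^∞}` its perfect hull
(i.e. a perfect purely inseparable extension of `K₀`), with the unique extension
of the valuation.  Let `ϑ` be a root of `X^p - X - 1/t` and `L = K(ϑ)`.  Then the
extension `(K(ϑ)|K,v)` is immediate of degree `p` (hence a defect extension), and
`v(ϑ - K) = {α ∈ vK | α < 0}` (multiplicatively: `{g ∈ vK | 1 < g}`). -/
theorem perfect_hull_laurent_artin_schreier_defect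
    {k : Type*} [Field k] {p : ℕ} (hp : p.Prime) [CharP k p] [ExpChar k p] [PerfectRing k p]
    {K L : Type*} [Field K] [Field L]
    [Algebra (LaurentSeries k) K] [Algebra K L] [Algebra (LaurentSeries k) L]
    [IsScalarTower (LaurentSeries k) K L]
    [CharP K p] [ExpChar K p] [PerfectRing K p] [IsPurelyInseparable (LaurentSeries k) K]
    {Γ : Type*} [LinearOrderedCommGroupWithZero Γ] (v : Valuation L Γ)
    -- `v` restricts to the `t`-adic valuation on `k((t))`
    (hres : (v.comap (algebraMap (LaurentSeries k) L)).IsEquiv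
        (Valued.v : Valuation (LaurentSeries k) (WithZero (Multiplicative ℤ))))
    (ϑ : L)
    (hϑ : ϑ ^ p - ϑ = (algebraMap (LaurentSeries k) L (HahnSeries.single (1 : ℤ) (1 : k)))⁻¹)
    (hgen : Algebra.adjoin K {ϑ} = ⊤) :
    -- the extension `(K(ϑ)|K,v)` has degree `p` ...
    Module.finrank K L = p ∧
    -- ... and is immediate: `vK(ϑ) = vK` and `K(ϑ)v = Kv`
    (∀ x : L, x ≠ 0 → ∃ c : K, v (algebraMap K L c) = v x) ∧
    (∀ x : L, v x ≤ 1 → ∃ c : K, v (x - algebraMap K L c) < 1) ∧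
    -- `v(ϑ - K) = (vK)^{<0}` (multiplicatively `{g ∈ vK | 1 < g}`)
    (∀ g : Γ, (∃ c : K, v (ϑ - algebraMap K L c) = g) ↔
        ((∃ c : K, c ≠ 0 ∧ v (algebraMap K L c) = g) ∧ 1 < g)) := by
  classical
  have hp2 : 2 ≤ p := hp.two_le
  have hppos : 0 < p := hp.pos
  have hpn0 : ∀ n : ℕ, p ^ n ≠ 0 := fun n => (pow_pos hppos n).ne'
  haveI charF : CharP (LaurentSeries k) p := aux_charF
  haveI expF : ExpChar (LaurentSeries k) p := aux_expCharF hp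
  haveI charL : CharP L p := charP_of_injective_algebraMap (algebraMap K L).injective p
  haveI expL : ExpChar L p := ExpChar.prime hp
  set u0 : LaurentSeries k := ((HahnSeries.single (1:ℤ) (1:k) : LaurentSeries k))⁻¹ with hu0def
  set u : K := algebraMap (LaurentSeries k) K u0 with hudef
  have hAL : ∀ a : LaurentSeries k,
      algebraMap (LaurentSeries k) L a = algebraMap K L (algebraMap (LaurentSeries k) K a) :=
    fun a => IsScalarTower.algebraMap_apply _ _ _ a
  have hϑu : ϑ ^ p - ϑ = algebraMap K L u := by
    rw [hϑ, hudef, ← hAL, hu0def, map_inv₀]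
  -- transfer lemmas
  have trans_le : ∀ a b : LaurentSeries k,
      v (algebraMap (LaurentSeries k) L a) ≤ v (algebraMap (LaurentSeries k) L b) ↔
        Valued.v a ≤ Valued.v b := fun a b => hres a b
  have trans_eq' : ∀ a b : LaurentSeries k,
      v (algebraMap (LaurentSeries k) L a) = v (algebraMap (LaurentSeries k) L b) →
        Valued.v a = Valued.v b := by
    intro a b h
    exact le_antisymm ((trans_le a b).mp (le_of_eq h)) ((trans_le b a).mp (le_of_eq h.symm))
  have trans_lt_one : ∀ a : LaurentSeries k,
      1 < Valued.v a → 1 < v (algebraMap (LaurentSeries k) L a) := by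
    intro a ha
    have h2 := trans_le a 1
    simp only [map_one] at h2
    exact lt_of_not_ge fun hle => absurd (h2.mp hle) (not_le.mpr ha)
  have trans_lt_one' : ∀ a : LaurentSeries k,
      1 < v (algebraMap (LaurentSeries k) L a) → 1 < Valued.v a := by
    intro a ha
    have h2 := trans_le a 1
    simp only [map_one] at h2
    exact lt_of_not_ge fun hle => absurd (h2.mpr hle) (not_le.mpr ha)
  -- subring of "constants"
  set Sr : Subring K := (algebraMap (LaurentSeries k) K).range with hSrdef
  -- p-th roots
  set ρ : K → K := fun x => (frobeniusEquiv K p).symm x with hρdef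
  have hρpow : ∀ x : K, (ρ x) ^ p = x := fun x => frobeniusEquiv_symm_pow_p K p x
  set s : ℕ → K := fun n => ρ^[n] u with hsdef
  have hs0 : s 0 = u := rfl
  have hssucc : ∀ n, s (n+1) = ρ (s n) := fun n => Function.iterate_succ_apply' ρ n u
  have hspow : ∀ n, (s (n+1)) ^ p = s n := fun n => by rw [hssucc]; exact hρpow _
  have hspown : ∀ n, (s n) ^ (p ^ n) = u := by
    intro n
    induction n with
    | zero => simp [hs0]
    | succ n ih => rw [pow_succ', pow_mul, hspow n, ih]
  set cs : ℕ → K := fun n => ∑ i ∈ Finset.range n, s (i+1) with hcsdef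
  have hcssucc : ∀ n, cs (n+1) = cs n + s (n+1) := fun n => Finset.sum_range_succ _ n
  have tel : ∀ n, u - ((cs n)^p - cs n) = s n := by
    intro n
    induction n with
    | zero =>
        show u - ((0:K)^p - 0) = u
        rw [zero_pow hppos.ne']
        ring
    | succ n ih =>
        rw [hcssucc, add_pow_expChar, hspow]
        linear_combination ih
  -- Claim A
  have hClaimA : ∀ c : K, 1 < v (algebraMap K L (u - (c^p - c))) := by
    intro c
    obtain ⟨m, hmem⟩ := IsPurelyInseparable.pow_mem (LaurentSeries k) p c
    obtain ⟨b, hb⟩ := hmem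
    have hz : (u - (c^p - c)) ^ (p ^ m)
        = algebraMap (LaurentSeries k) K (-(b^p - b - u0 ^ (p^m))) := by
      rw [sub_pow_expChar_pow, sub_pow_expChar_pow, pow_right_comm, ← hb, hudef,
        ← map_pow, ← map_pow, ← map_sub, ← map_sub]
      congr 1
      ring
    have hval : (v (algebraMap K L (u - (c^p - c)))) ^ (p^m)
        = v (algebraMap (LaurentSeries k) L (-(b^p - b - u0 ^ (p^m)))) := by
      rw [← map_pow, ← map_pow, hz, ← hAL]
    have hgt : 1 < Valued.v (-(b^p - b - u0 ^ (p^m))) := by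
      rw [Valuation.map_neg]
      exact aux_AS hp m b
    have := trans_lt_one _ hgt
    rw [← hval] at this
    exact aux_one_lt_of_pow this
  -- Claim B
  have hClaimB : ∀ c : K, 1 < v (ϑ - algebraMap K L c) ∧
      v (ϑ - algebraMap K L c) = v (algebraMap K L (ρ (u - (c^p - c)))) := by
    intro c
    set δ := ϑ - algebraMap K L c with hδdef
    have key : δ ^ p - δ = algebraMap K L (u - (c^p - c)) := by
      rw [hδdef, sub_pow_expChar, ← map_pow, map_sub, map_sub]
      linear_combination hϑu
    have hz1 : 1 < v (algebraMap K L (u - (c^p - c))) := hClaimA c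
    have hδ1 : 1 < v δ := by
      by_contra hle
      have h1 : v (δ ^ p) ≤ 1 := by
        rw [map_pow]; exact pow_le_one₀ zero_le' (not_lt.mp hle)
      have h2 : v (δ ^ p - δ) ≤ 1 :=
        le_trans (Valuation.map_sub _ _ _) (max_le h1 (not_lt.mp hle))
      rw [key] at h2
      exact absurd hz1 (not_lt.mpr h2)
    have hlt : v δ < v (δ ^ p) := by
      rw [map_pow]; exact aux_self_lt_pow hδ1 hp2
    have hfirst : v (δ ^ p - δ) = v (δ ^ p) := val_sub_left v hlt
    have hmain : (v δ) ^ p = v (algebraMap K L (u - (c^p - c))) := by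
      rw [← key, hfirst, map_pow]
    have hrpow : (v (algebraMap K L (ρ (u - (c^p - c))))) ^ p
        = v (algebraMap K L (u - (c^p - c))) := by
      rw [← map_pow, ← map_pow, hρpow]
    exact ⟨hδ1, aux_pow_cancel hppos.ne' (by rw [hmain, hrpow])⟩
  have hEps : ∀ n, v (ϑ - algebraMap K L (cs n)) = v (algebraMap K L (s (n+1))) := by
    intro n
    rw [(hClaimB (cs n)).2, tel n, ← hssucc]
  have hθnotin : ∀ c : K, ϑ ≠ algebraMap K L c := by
    intro c heq
    have h1 := (hClaimB c).1
    rw [heq, sub_self, map_zero] at h1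
    exact absurd h1 (not_lt.mpr zero_le_one)
  -- membership lemmas
  have hCPOW : ∀ n, (cs n) ^ (p ^ n) ∈ Sr := by
    intro n
    have hsum : (cs n) ^ (p ^ n) = ∑ i ∈ Finset.range n, (s (i+1)) ^ (p ^ n) := by
      show (∑ i ∈ Finset.range n, s (i+1)) ^ (p ^ n) = _
      exact sum_pow_char_pow _ _ _ _
    rw [hsum]
    apply Subring.sum_mem
    intro i hi
    have hin : i + 1 ≤ n := Finset.mem_range.mp hi
    have hpow : (s (i+1)) ^ (p ^ n) = u ^ (p ^ (n - (i+1))) := by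
      rw [← hspown (i+1), ← pow_mul, ← pow_add, show i + 1 + (n - (i+1)) = n from by omega]
    rw [hpow, hudef]
    exact Subring.pow_mem _ (RingHom.mem_range.mpr ⟨u0, rfl⟩) _
  have hMONO : ∀ (x : K) (m n : ℕ), m ≤ n → x ^ (p ^ m) ∈ Sr → x ^ (p ^ n) ∈ Sr := by
    intro x m n hmn hx
    have : x ^ (p ^ n) = (x ^ (p ^ m)) ^ (p ^ (n - m)) := by
      rw [← pow_mul, ← pow_add, show m + (n - m) = n from by omega]
    rw [this]
    exact Subring.pow_mem _ hx _
  have hLEV : ∀ G : Polynomial K, ∃ M, ∀ n, M ≤ n → ∀ j, (G.coeff j) ^ (p ^ n) ∈ Sr := by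
    intro G
    have main : ∀ T : Finset ℕ, ∃ M, ∀ j ∈ T, (G.coeff j) ^ (p ^ M) ∈ Sr := by
      intro T
      induction T using Finset.induction_on with
      | empty => exact ⟨0, by simp⟩
      | insert _ _ hj ih =>
          obtain ⟨M1, hM1⟩ := ih
          obtain ⟨M2, hM2⟩ := IsPurelyInseparable.pow_mem (LaurentSeries k) p (G.coeff _)
          refine ⟨max M1 M2, ?_⟩
          intro j' hj'
          rcases Finset.mem_insert.mp hj' with rfl | hmem
          · exact hMONO _ _ _ (le_max_right _ _) hM2
          · exact hMONO _ _ _ (le_max_left _ _) (hM1 _ hmem)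
    obtain ⟨M, hM⟩ := main G.support
    refine ⟨M, fun n hn j => ?_⟩
    by_cases hjs : j ∈ G.support
    · exact hMONO _ _ _ hn (hM j hjs)
    · rw [Polynomial.notMem_support_iff.mp hjs, zero_pow (hpn0 n)]
      exact Subring.zero_mem _
  have evalmem : ∀ (Q : Polynomial K) (x : K), (∀ j, Q.coeff j ∈ Sr) → x ∈ Sr → Q.eval x ∈ Sr := by
    intro Q x hQ hx
    rw [Polynomial.eval_eq_sum_range]
    exact Subring.sum_mem _ (fun i _ => Subring.mul_mem _ (hQ i) (Subring.pow_mem _ hx i))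
  have natdvd : ∀ i j : ℕ, i < p → j < p → (p:ℤ) ∣ ((i:ℤ) - (j:ℤ)) → i = j := by
    intro i j hip hjp hd
    have h2 : (i:ℤ) - j = 0 := Int.eq_zero_of_abs_lt_dvd hd (by rw [abs_sub_lt_iff]; omega)
    omega
  -- THE EXPANSION LEMMA
  have hEXPAND : ∀ (G : Polynomial K) (n : ℕ), G ≠ 0 → G.natDegree < p →
      (∀ j, (G.coeff j) ^ (p ^ n) ∈ Sr) →
      Polynomial.aeval ϑ G ≠ 0 ∧
      ((∃ c', v (Polynomial.aeval ϑ G - algebraMap K L c') < v (Polynomial.aeval ϑ G)) ∨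
       (∃ i₀ B, 0 < i₀ ∧ i₀ < p ∧ B ≠ 0 ∧
         (v (Polynomial.aeval ϑ G)) ^ (p ^ (n+1)) =
           v (algebraMap (LaurentSeries k) L (B ^ p * u0 ^ i₀)))) := by
    intro G n hG0 hGdeg hlev
    set c : K := cs n with hcdef
    set δ : L := ϑ - algebraMap K L c with hδdef
    have hδ1 : 1 < v δ := (hClaimB c).1
    have hδ0 : δ ≠ 0 := by
      intro h0
      exact hθnotin c (by rw [← sub_eq_zero]; exact h0)
    have hδv : v δ = v (algebraMap K L (s (n+1))) := hEps n
    set h : ℕ → K := fun i => (Polynomial.taylor c G).coeff i with hhdef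
    set T : ℕ → L := fun i => algebraMap K L (h i) * δ ^ i with hTdef
    -- the expansion identity
    have E1 : Polynomial.aeval ϑ G = ∑ i ∈ Finset.range p, T i := by
      have htay : (Polynomial.taylor (algebraMap K L c) (G.map (algebraMap K L))).natDegree < p := by
        rw [Polynomial.natDegree_taylor]
        exact lt_of_le_of_lt Polynomial.natDegree_map_le hGdeg
      have e0 : Polynomial.aeval ϑ G = (G.map (algebraMap K L)).eval ϑ := by
        rw [Polynomial.aeval_def, Polynomial.eval_map]
      rw [e0, ← Polynomial.taylor_eval_sub (algebraMap K L c) _ ϑ,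
        Polynomial.eval_eq_sum_range' htay]
      apply Finset.sum_congr rfl
      intro i _
      congr 1
      have hmap : Polynomial.hasseDeriv i (G.map (algebraMap K L))
          = (Polynomial.hasseDeriv i G).map (algebraMap K L) := by
        ext j
        simp [Polynomial.hasseDeriv_coeff, Polynomial.coeff_map]
      rw [Polynomial.taylor_coeff, hmap, Polynomial.eval_map, Polynomial.eval₂_at_apply,
        hhdef]
      simp only [Polynomial.taylor_coeff]
    -- coefficients have controlled Frobenius powers
    have E3 : ∀ i, (h i) ^ (p ^ n) ∈ Sr := by
      intro i
      have htc : h i = (Polynomial.hasseDeriv i G).eval c := Polynomial.taylor_coeff _ _ _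
      have hφ0 := Polynomial.eval₂_at_apply (p := Polynomial.hasseDeriv i G)
        (iterateFrobenius K p n) c
      rw [← Polynomial.eval_map] at hφ0
      have hφ : (h i) ^ (p ^ n)
          = ((Polynomial.hasseDeriv i G).map (iterateFrobenius K p n)).eval
              ((iterateFrobenius K p n) c) := by
        rw [htc, ← iterateFrobenius_def (p := p), hφ0]
      rw [hφ]
      apply evalmem
      · intro j
        rw [Polynomial.coeff_map, iterateFrobenius_def, Polynomial.hasseDeriv_coeff, mul_pow]
        exact Subring.mul_mem _ (by
          have : ((((j + i).choose i : ℕ) : K)) ^ (p ^ n) ∈ Sr := by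
            refine Subring.pow_mem _ ?_ _
            exact_mod_cast natCast_mem Sr ((j + i).choose i)
          exact this) (hlev (j + i))
      · rw [iterateFrobenius_def]
        exact hCPOW n
    -- raising values to the `p^(n+1)` power
    have RAISE : ∀ (w : K) (B : LaurentSeries k) (i : ℕ),
        w ^ (p ^ n) = algebraMap (LaurentSeries k) K B →
        (v (algebraMap K L (w * (s (n+1)) ^ i))) ^ (p ^ (n+1)) =
          v (algebraMap (LaurentSeries k) L (B ^ p * u0 ^ i)) := by
      intro w B i hw
      rw [← map_pow, ← map_pow, hAL]
      congr 2
      have e1 : w ^ (p ^ (n+1)) = algebraMap (LaurentSeries k) K (B ^ p) := by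
        rw [pow_succ, pow_mul, hw, ← map_pow]
      have e2 : ((s (n+1)) ^ i) ^ (p ^ (n+1)) = algebraMap (LaurentSeries k) K (u0 ^ i) := by
        rw [← pow_mul, mul_comm i, pow_mul, hspown (n+1), hudef, ← map_pow]
      rw [mul_pow, e1, e2, ← map_mul]
    have valT : ∀ i, v (T i) = v (algebraMap K L (h i * (s (n+1)) ^ i)) := by
      intro i
      show v (algebraMap K L (h i) * δ ^ i) = _
      calc v (algebraMap K L (h i) * δ ^ i)
          = v (algebraMap K L (h i)) * (v δ) ^ i := by rw [map_mul, map_pow]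
        _ = v (algebraMap K L (h i)) * (v (algebraMap K L (s (n+1)))) ^ i := by rw [hδv]
        _ = v (algebraMap K L (h i * (s (n+1)) ^ i)) := by
            rw [map_mul (algebraMap K L), map_pow (algebraMap K L), map_mul v, map_pow v]
    have DIST : ∀ i j, i < p → j < p → h i ≠ 0 → h j ≠ 0 → v (T i) = v (T j) → i = j := by
      intro i j hip hjp hhi hhj hvij
      obtain ⟨Bi, hBi⟩ := RingHom.mem_range.mp (E3 i)
      obtain ⟨Bj, hBj⟩ := RingHom.mem_range.mp (E3 j)
      have hBine : Bi ≠ 0 := by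
        intro h0
        rw [h0, map_zero] at hBi
        exact (pow_ne_zero _ hhi) hBi.symm
      have hBjne : Bj ≠ 0 := by
        intro h0
        rw [h0, map_zero] at hBj
        exact (pow_ne_zero _ hhj) hBj.symm
      rw [valT i, valT j] at hvij
      have hv2 : v (algebraMap K L (h i * (s (n+1)) ^ i)) ^ (p ^ (n+1))
          = v (algebraMap K L (h j * (s (n+1)) ^ j)) ^ (p ^ (n+1)) := by rw [hvij]
      rw [RAISE _ _ _ hBi.symm, RAISE _ _ _ hBj.symm] at hv2
      have hv3 := trans_eq' _ _ hv2
      exact natdvd i j hip hjp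
        (aux_int Bi Bj hBine hBjne p p i j ⟨1, by push_cast; ring⟩ ⟨1, by push_cast; ring⟩ hv3)
    -- the maximizing index
    set If : Finset ℕ := (Finset.range p).filter (fun i => h i ≠ 0) with hIfdef
    have htne : Polynomial.taylor c G ≠ 0 := fun h0 =>
      hG0 (Polynomial.taylor_injective c (by rw [h0, map_zero]))
    have hdcoeff : h G.natDegree ≠ 0 := by
      intro hcoef
      apply htne
      apply Polynomial.leadingCoeff_eq_zero.mp
      rw [Polynomial.leadingCoeff, Polynomial.natDegree_taylor]
      exact hcoef
    have hdmem : G.natDegree ∈ If :=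
      Finset.mem_filter.mpr ⟨Finset.mem_range.mpr hGdeg, hdcoeff⟩
    obtain ⟨i₀, hi₀mem, hmax⟩ := Finset.exists_max_image If (fun i => v (T i)) ⟨_, hdmem⟩
    have hi₀p : i₀ < p := Finset.mem_range.mp (Finset.mem_filter.mp hi₀mem).1
    have hhi₀ : h i₀ ≠ 0 := (Finset.mem_filter.mp hi₀mem).2
    have hTi₀ : v (T i₀) ≠ 0 := by
      rw [hTdef]
      refine (Valuation.ne_zero_iff v).mpr ?_
      exact mul_ne_zero ((map_ne_zero (algebraMap K L)).mpr hhi₀) (pow_ne_zero i₀ hδ0)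
    have hdom : ∀ i ∈ Finset.range p, i ≠ i₀ → v (T i) < v (T i₀) := by
      intro i hi hine
      by_cases hzi : h i = 0
      · have hTz : T i = 0 := by rw [hTdef]; simp [hzi]
        rw [hTz, map_zero]
        exact zero_lt_iff.mpr hTi₀
      · have hmem : i ∈ If := Finset.mem_filter.mpr ⟨hi, hzi⟩
        exact lt_of_le_of_ne (hmax i hmem)
          (fun heq => hine (DIST i i₀ (Finset.mem_range.mp hi) hi₀p hzi hhi₀ heq))
    have hi₀range : i₀ ∈ Finset.range p := Finset.mem_range.mpr hi₀p
    have E6 : v (Polynomial.aeval ϑ G) = v (T i₀) := by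
      rw [E1]
      exact val_sum_eq v hi₀range hTi₀ hdom
    have hne : Polynomial.aeval ϑ G ≠ 0 := by
      intro h0
      rw [h0, map_zero] at E6
      exact hTi₀ E6.symm
    refine ⟨hne, ?_⟩
    rcases Nat.eq_zero_or_pos i₀ with hzero | hpos
    · left
      subst hzero
      have h0mem : (0:ℕ) ∈ Finset.range p := Finset.mem_range.mpr hppos
      have hT0 : T 0 = algebraMap K L (h 0) := by rw [hTdef]; simp
      refine ⟨h 0, ?_⟩
      have hsplit : Polynomial.aeval ϑ G - algebraMap K L (h 0)
          = ∑ i ∈ (Finset.range p).erase 0, T i := by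
        rw [E1, ← hT0, ← Finset.add_sum_erase _ T h0mem]
        ring
      rw [hsplit, E6]
      exact Valuation.map_sum_lt v hTi₀ (fun i hi =>
        hdom i (Finset.mem_of_mem_erase hi) (Finset.ne_of_mem_erase hi))
    · right
      obtain ⟨B, hB⟩ := RingHom.mem_range.mp (E3 i₀)
      have hBne : B ≠ 0 := by
        intro h0
        rw [h0, map_zero] at hB
        exact (pow_ne_zero _ hhi₀) hB.symm
      refine ⟨i₀, B, hpos, hi₀p, hBne, ?_⟩
      rw [E6, valT i₀]
      exact RAISE (h i₀) B i₀ hB.symm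
  -- the minimal polynomial has degree `p`
  set f : Polynomial K := Polynomial.X ^ p - Polynomial.X - Polynomial.C u with hfdef
  have hfrw : f = Polynomial.X ^ p - (Polynomial.X + Polynomial.C u) := by rw [hfdef]; ring
  have hfmonic : f.Monic := by
    rw [hfrw]
    apply Polynomial.monic_X_pow_sub
    apply lt_of_le_of_lt (Polynomial.degree_add_le _ _)
    rw [max_lt_iff]
    constructor
    · rw [Polynomial.degree_X]
      exact_mod_cast hp.one_lt
    · exact lt_of_le_of_lt (Polynomial.degree_C_le) (by exact_mod_cast hppos)
  have haev : Polynomial.aeval ϑ f = 0 := by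
    rw [hfdef]
    simp only [map_sub, map_pow, Polynomial.aeval_X, Polynomial.aeval_C]
    rw [sub_sub, ← hϑu]
    ring
  have hint : IsIntegral K ϑ := ⟨f, hfmonic, by rwa [← Polynomial.aeval_def]⟩
  have hfdeg : f.natDegree = p := by
    rw [hfrw]
    rw [Polynomial.natDegree_sub_eq_left_of_natDegree_lt]
    · exact Polynomial.natDegree_X_pow p
    · rw [Polynomial.natDegree_X_pow]
      apply lt_of_le_of_lt (Polynomial.natDegree_add_le _ _)
      rw [max_lt_iff]
      exact ⟨by rw [Polynomial.natDegree_X]; exact hp.one_lt,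
        by rw [Polynomial.natDegree_C]; exact hppos⟩
  have hq : minpoly K ϑ ∣ f := minpoly.dvd K ϑ haev
  have hdle : (minpoly K ϑ).natDegree ≤ p := by
    rw [← hfdeg]
    exact Polynomial.natDegree_le_of_dvd hq hfmonic.ne_zero
  have hmind : (minpoly K ϑ).natDegree = p := by
    refine le_antisymm hdle (not_lt.mp ?_)
    intro hlt
    obtain ⟨M, hM⟩ := hLEV (minpoly K ϑ)
    exact (hEXPAND (minpoly K ϑ) M (minpoly.ne_zero hint) hlt (hM M le_rfl)).1
      (minpoly.aeval K ϑ)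
  -- the power basis
  let e : ↥(Algebra.adjoin K ({ϑ} : Set L)) ≃ₐ[K] L :=
    (Subalgebra.equivOfEq _ _ hgen).trans Subalgebra.topEquiv
  set pb : PowerBasis K L := (Algebra.adjoin.powerBasis hint).map e with hpbdef
  have hpbdim : pb.dim = p := by
    rw [hpbdef]
    show (Algebra.adjoin.powerBasis hint).dim = p
    rw [Algebra.adjoin.powerBasis_dim, hmind]
  have hpbgen : pb.gen = ϑ := by
    rw [hpbdef, PowerBasis.map_gen, Algebra.adjoin.powerBasis_gen]
    rfl
  have hfinrank : Module.finrank K L = p := by rw [pb.finrank, hpbdim]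
  -- the approximation property
  have hstar : ∀ x : L, x ≠ 0 → ∃ c0 : K, v (x - algebraMap K L c0) < v x := by
    intro x hx
    obtain ⟨G, hGdeg, hGx⟩ := pb.exists_eq_aeval x
    rw [hpbgen] at hGx
    have hG0 : G ≠ 0 := fun h0 => hx (by rw [hGx, h0, map_zero])
    rw [hpbdim] at hGdeg
    obtain ⟨M, hM⟩ := hLEV G
    obtain ⟨hne1, h1⟩ := hEXPAND G M hG0 hGdeg (hM M le_rfl)
    obtain ⟨hne2, h2⟩ := hEXPAND G (M+1) hG0 hGdeg (hM (M+1) (by omega))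
    rcases h1 with ⟨c', hc'⟩ | ⟨i1, B1, hi1pos, hi1p, hB1ne, hv1⟩
    · exact ⟨c', by rwa [← hGx] at hc'⟩
    rcases h2 with ⟨c', hc'⟩ | ⟨i2, B2, hi2pos, hi2p, hB2ne, hv2⟩
    · exact ⟨c', by rwa [← hGx] at hc'⟩
    exfalso
    have hexp : (B1 ^ p * u0 ^ i1) ^ p = B1 ^ (p*p) * u0 ^ (p * i1) := by
      rw [mul_pow, ← pow_mul, ← pow_mul, mul_comm i1 p]
    have hv1' : (v (Polynomial.aeval ϑ G)) ^ (p ^ (M+2)) =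
        v (algebraMap (LaurentSeries k) L (B1 ^ (p*p) * u0 ^ (p * i1))) := by
      rw [← hexp, map_pow, map_pow v, ← hv1, ← pow_mul, ← pow_succ]
    have heq : v (algebraMap (LaurentSeries k) L (B1 ^ (p*p) * u0 ^ (p*i1)))
        = v (algebraMap (LaurentSeries k) L (B2 ^ p * u0 ^ i2)) := by
      rw [← hv1', hv2]
    have hval := trans_eq' _ _ heq
    have hdvd := aux_int B1 B2 hB1ne hB2ne (p*p) p (p*i1) i2
      ⟨p, by push_cast; ring⟩ ⟨1, by push_cast; ring⟩ hval
    have hdvd2 : (p:ℤ) ∣ (i2:ℤ) := by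
      have hpi : (p:ℤ) ∣ ((p*i1:ℕ):ℤ) := by push_cast; exact Dvd.intro i1 rfl
      have := dvd_sub hpi hdvd
      simpa using this
    have hple : p ≤ i2 := Nat.le_of_dvd hi2pos (Int.ofNat_dvd.mp hdvd2)
    omega
  refine ⟨hfinrank, ?_, ?_, ?_⟩
  · -- value groups agree
    intro x hx
    obtain ⟨c0, hc0⟩ := hstar x hx
    refine ⟨c0, ?_⟩
    have hrw : algebraMap K L c0 = x - (x - algebraMap K L c0) := by ring
    rw [hrw, val_sub_left v hc0]
  · -- residue fields agree
    intro x hxle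
    by_cases hx : x = 0
    · refine ⟨0, ?_⟩
      rw [hx, map_zero, sub_zero, map_zero]
      exact zero_lt_one
    · obtain ⟨c0, hc0⟩ := hstar x hx
      exact ⟨c0, lt_of_lt_of_le hc0 hxle⟩
  · -- the set v(ϑ - K)
    intro g
    constructor
    · rintro ⟨c, rfl⟩
      obtain ⟨hB1, hB2⟩ := hClaimB c
      refine ⟨⟨ρ (u - (c^p - c)), ?_, hB2.symm⟩, hB1⟩
      intro h0
      rw [h0, map_zero, map_zero] at hB2
      rw [hB2] at hB1
      exact absurd hB1 (not_lt.mpr zero_le')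
    · rintro ⟨⟨c, hc0, hcg⟩, hg1⟩
      obtain ⟨m, hmem⟩ := IsPurelyInseparable.pow_mem (LaurentSeries k) p c
      obtain ⟨b, hb⟩ := hmem
      have hbne : b ≠ 0 := by
        intro h0
        rw [h0, map_zero] at hb
        exact (pow_ne_zero _ hc0) hb.symm
      have hgpow : (v (algebraMap K L c)) ^ (p ^ m)
          = v (algebraMap (LaurentSeries k) L b) := by
        rw [← map_pow, ← map_pow, ← hb, ← hAL]
      have h1lt : 1 < Valued.v b := by
        apply trans_lt_one' b
        rw [← hgpow]
        exact one_lt_pow₀ (by rw [hcg]; exact hg1) (hpn0 m)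
      have hu0le : Valued.v u0 ≤ Valued.v b := by
        rw [hu0def, aux_vu0]
        exact aux_gap h1lt
      have hge : v (algebraMap K L u) ≤ (v (algebraMap K L c)) ^ (p ^ m) := by
        rw [hgpow, hudef, ← hAL]
        exact (trans_le u0 b).mpr hu0le
      have hslt : v (algebraMap K L (s (m+1))) < v (algebraMap K L c) := by
        apply aux_lt_of_pow_lt (n := p ^ (m+1))
        have hl : (v (algebraMap K L (s (m+1)))) ^ (p ^ (m+1)) = v (algebraMap K L u) := by
          rw [← map_pow, ← map_pow, hspown (m+1)]
        rw [hl]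
        apply lt_of_le_of_lt hge
        have h1c : 1 < (v (algebraMap K L c)) ^ (p ^ m) :=
          one_lt_pow₀ (by rw [hcg]; exact hg1) (hpn0 m)
        calc (v (algebraMap K L c)) ^ (p ^ m)
            < ((v (algebraMap K L c)) ^ (p ^ m)) ^ p := aux_self_lt_pow h1c hp2
          _ = (v (algebraMap K L c)) ^ (p ^ (m+1)) := by rw [← pow_mul, ← pow_succ]
      refine ⟨cs m - c, ?_⟩
      have hsplit : ϑ - algebraMap K L (cs m - c)
          = (ϑ - algebraMap K L (cs m)) + algebraMap K L c := by
        rw [map_sub]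
        ring
      rw [hsplit, ← hcg]
      apply val_add_right
      rw [hEps m]
      exact hslt
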